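/- For every threshold t and independent nonnegative random variables v_1,...,v_n, the expected value obtained by the t-threshold stopping rule is at least (1-q(t))·t + q(t)·∑_{i=1}^n E[(v_i - t)^+], where q(t) = Pr[v_i < t for all i]. -/

import Mathlib

open MeasureTheory ProbabilityTheory

/-- The value obtained by the `t`-threshold stopping rule: accept the first prize `i`
with `v i ≥ t` (obtaining `v i`), and obtain `0` if no prize meets the threshold. -/
noncomputable def thresholdPayoff {Ω : Type*} {n : ℕ} (t : ℝ) (v : Fin n → Ω → ℝ) (ω : Ω) : ℝ :=
  match Fin.find? (fun i => decide (t ≤ v i ω)) with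
  | some i => v i ω
  | none => 0

lemma payoff_decomp {Ω : Type*} {n : ℕ} (t : ℝ) (v : Fin n → Ω → ℝ) (ω : Ω) :
    thresholdPayoff t v ω
      = Set.indicator {ω | ∃ i, t ≤ v i ω} (fun _ => t) ω
        + ∑ i, Set.indicator {ω | ∀ j, j < i → v j ω < t}
            (fun ω => max (v i ω - t) 0) ω := by
  unfold thresholdPayoff
  rcases h : Fin.find? (fun i => decide (t ≤ v i ω)) with _ | i
  · rw [Fin.find?_eq_none_iff] at h
    simp only [decide_eq_false_iff_not] at h
    simp only
    rw [Set.indicator_of_notMem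
      (show ω ∉ {ω | ∃ i, t ≤ v i ω} from fun ⟨i, hi⟩ => h i hi)]
    rw [Finset.sum_eq_zero, add_zero]
    intro i _
    rcases Set.indicator_eq_zero_or_self {ω | ∀ j, j < i → v j ω < t}
        (fun ω => max (v i ω - t) 0) ω with h0 | h0
    · exact h0
    · rw [h0]
      simp [le_of_lt (lt_of_not_ge (h i))]
  · rw [Fin.find?_eq_some_iff] at h
    simp only [decide_eq_true_eq, decide_eq_false_iff_not] at h
    obtain ⟨hi, hmin⟩ := h
    have hlt : ∀ j, j < i → v j ω < t := fun j hj =>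
      lt_of_not_ge (hmin j hj)
    rw [Set.indicator_of_mem (show ω ∈ {ω | ∃ i, t ≤ v i ω} from ⟨i, hi⟩)]
    rw [Finset.sum_eq_single i]
    · rw [Set.indicator_of_mem (show ω ∈ {ω | ∀ j, j < i → v j ω < t} from hlt)]
      simp only
      rw [max_eq_left (by linarith)]
      ring
    · intro j _ hj
      rcases lt_or_gt_of_ne hj with hji | hji
      · rcases Set.indicator_eq_zero_or_self {ω | ∀ k, k < j → v k ω < t}
            (fun ω => max (v j ω - t) 0) ω with h0 | h0
        · exact h0
        · rw [h0]; simp [le_of_lt (hlt j hji)]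
      · exact Set.indicator_of_notMem
          (show ω ∉ {ω | ∀ k, k < j → v k ω < t} from
            fun hm => absurd (hm i hji) (not_lt.mpr hi)) _
    · intro h; exact absurd (Finset.mem_univ i) h

lemma indep_step {Ω : Type*} [MeasurableSpace Ω] (μ : Measure Ω)
    {n : ℕ} (t : ℝ) (v : Fin n → Ω → ℝ)
    (hmeas : ∀ i, Measurable (v i))
    (hindep : iIndepFun v μ) (i : Fin n) :
    IndepFun (fun ω => max (v i ω - t) 0)
      (Set.indicator {ω | ∀ j, j < i → v j ω < t} (fun _ => (1:ℝ))) μ := by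
  classical
  set T : Finset (Fin n) := Finset.univ.filter (· < i) with hT
  have hdisj : Disjoint ({i} : Finset (Fin n)) T := by
    simp [hT, Finset.disjoint_left]
  have base := hindep.indepFun_finset {i} T hdisj hmeas
  have hmem : i ∈ ({i} : Finset (Fin n)) := Finset.mem_singleton_self i
  let φ : (({i} : Finset (Fin n)) → ℝ) → ℝ := fun g => max (g ⟨i, hmem⟩ - t) 0
  let ψ : (T → ℝ) → ℝ := fun g => Set.indicator {g | ∀ j, g j < t} (fun _ => (1:ℝ)) g
  have hφ : Measurable φ := by fun_prop
  have hψ : Measurable ψ := by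
    apply Measurable.indicator measurable_const
    have : {g : T → ℝ | ∀ j, g j < t} = ⋂ j, (fun g : T → ℝ => g j) ⁻¹' Set.Iio t := by
      ext g; simp
    rw [this]
    exact MeasurableSet.iInter fun j => (measurable_pi_apply j) measurableSet_Iio
  have := base.comp hφ hψ
  convert this using 1
  · rfl
  funext ω
  show Set.indicator {ω | ∀ j, j < i → v j ω < t} (fun _ => (1:ℝ)) ω
    = Set.indicator {g : T → ℝ | ∀ j, g j < t} (fun _ => (1:ℝ)) (fun j : T => v j ω)
  have hiff : (ω ∈ {ω | ∀ j, j < i → v j ω < t}) ↔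
      ((fun j : T => v j ω) ∈ {g : T → ℝ | ∀ j, g j < t}) := by
    constructor
    · intro h j
      exact h j ((Finset.mem_filter.mp j.2).2)
    · intro h j hj
      exact h ⟨j, Finset.mem_filter.mpr ⟨Finset.mem_univ j, hj⟩⟩
  by_cases h : ω ∈ {ω | ∀ j, j < i → v j ω < t}
  · rw [Set.indicator_of_mem h, Set.indicator_of_mem (hiff.mp h)]
  · rw [Set.indicator_of_notMem h, Set.indicator_of_notMem (fun hm => h (hiff.mpr hm))]

/-- For every threshold `t`, the expected value of the `t`-threshold rule is at least
`(1 - q(t))·t + q(t)·∑ᵢ E[(vᵢ - t)⁺]`, where `q(t)` is the probability that no prize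
value reaches `t`. -/
theorem threshold_rule_lower_bound {Ω : Type*} [MeasurableSpace Ω] (μ : Measure Ω)
    [IsProbabilityMeasure μ] {n : ℕ} (t : ℝ) (v : Fin n → Ω → ℝ)
    (hmeas : ∀ i, Measurable (v i))
    (hnonneg : ∀ i ω, 0 ≤ v i ω)
    (hindep : iIndepFun v μ)
    (hint : ∀ i, Integrable (v i) μ)
    (hintpay : Integrable (thresholdPayoff t v) μ) :
    (1 - (μ {ω | ∀ i, v i ω < t}).toReal) * t
      + (μ {ω | ∀ i, v i ω < t}).toReal * ∑ i, ∫ ω, max (v i ω - t) 0 ∂μ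
      ≤ ∫ ω, thresholdPayoff t v ω ∂μ := by
  classical
  set Q : Set Ω := {ω | ∀ i, v i ω < t} with hQdef
  set A : Fin n → Set Ω := fun i => {ω | ∀ j, j < i → v j ω < t} with hAdef
  set B : Set Ω := {ω | ∃ i, t ≤ v i ω} with hBdef
  have hAmeas : ∀ i, MeasurableSet (A i) := by
    intro i
    have : A i = ⋂ j ∈ {j : Fin n | j < i}, (v j) ⁻¹' Set.Iio t := by
      ext ω; simp [hAdef]
    rw [this]
    exact MeasurableSet.biInter (Set.to_countable _)
      fun j _ => (hmeas j) measurableSet_Iio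
  have hQmeas : MeasurableSet Q := by
    have : Q = ⋂ j, (v j) ⁻¹' Set.Iio t := by ext ω; simp [hQdef]
    rw [this]
    exact MeasurableSet.iInter fun j => (hmeas j) measurableSet_Iio
  have hBmeas : MeasurableSet B := by
    have : B = Qᶜ := by ext ω; simp [hBdef, hQdef, not_forall, not_lt]
    rw [this]; exact hQmeas.compl
  -- integrability of the pieces
  have hfint : ∀ i, Integrable (fun ω => max (v i ω - t) 0) μ :=
    fun i => ((hint i).sub (integrable_const t)).pos_part
  have hindint : ∀ i, Integrable ((A i).indicator (fun ω => max (v i ω - t) 0)) μ :=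
    fun i => (hfint i).indicator (hAmeas i)
  have hBint : Integrable (B.indicator (fun _ => t)) μ :=
    (integrable_const t).indicator hBmeas
  -- compute the integral of the payoff
  have hpay : thresholdPayoff t v = fun ω =>
      B.indicator (fun _ => t) ω + ∑ i, (A i).indicator (fun ω => max (v i ω - t) 0) ω :=
    funext fun ω => payoff_decomp t v ω
  have hintegral : ∫ ω, thresholdPayoff t v ω ∂μ
      = (μ B).toReal * t + ∑ i, (∫ ω, max (v i ω - t) 0 ∂μ) * (μ (A i)).toReal := by
    rw [hpay]
    rw [integral_add hBint (integrable_finset_sum _ fun i _ => hindint i)]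
    rw [integral_finset_sum _ fun i _ => hindint i]
    congr 1
    · rw [integral_indicator_const t hBmeas, smul_eq_mul, measureReal_def]
    · refine Finset.sum_congr rfl fun i _ => ?_
      have hix : (A i).indicator (fun ω => max (v i ω - t) 0)
          = (fun ω => max (v i ω - t) 0) * (A i).indicator (fun _ => (1:ℝ)) := by
        funext ω
        by_cases h : ω ∈ A i <;>
          simp [Set.indicator_of_mem, Set.indicator_of_notMem, h]
      rw [hix, (indep_step μ t v hmeas hindep i).integral_mul_eq_mul_integral (hfint i).aestronglyMeasurable
        ((integrable_const (1:ℝ)).indicator (hAmeas i)).aestronglyMeasurable]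
      rw [integral_indicator_const (1:ℝ) (hAmeas i), smul_eq_mul, mul_one, measureReal_def]
  rw [hintegral]
  have hμB : (μ B).toReal = 1 - (μ Q).toReal := by
    have hBQ : B = Qᶜ := by ext ω; simp [hBdef, hQdef, not_forall, not_lt]
    rw [hBQ, prob_compl_eq_one_sub hQmeas, ENNReal.toReal_sub_of_le prob_le_one ENNReal.one_ne_top]
    simp
  rw [hμB]
  have hterm : ∀ i : Fin n, (μ Q).toReal * ∫ ω, max (v i ω - t) 0 ∂μ
      ≤ (∫ ω, max (v i ω - t) 0 ∂μ) * (μ (A i)).toReal := by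
    intro i
    rw [mul_comm]
    apply mul_le_mul_of_nonneg_left
    · apply ENNReal.toReal_mono (measure_ne_top μ _)
      apply measure_mono
      intro ω hω j _
      exact hω j
    · exact integral_nonneg fun ω => le_max_right _ _
  calc (1 - (μ Q).toReal) * t + (μ Q).toReal * ∑ i, ∫ ω, max (v i ω - t) 0 ∂μ
      = (1 - (μ Q).toReal) * t + ∑ i, (μ Q).toReal * ∫ ω, max (v i ω - t) 0 ∂μ := by
        rw [Finset.mul_sum]
    _ ≤ (1 - (μ Q).toReal) * t + ∑ i, (∫ ω, max (v i ω - t) 0 ∂μ) * (μ (A i)).toReal := by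
        exact add_le_add_right (Finset.sum_le_sum fun i _ => hterm i) _
    _ = _ := by ring
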